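/- Let X be a separable Banach space containing a complemented subspace isomorphic to ℓ¹(ℕ) (i.e., there exist continuous linear maps i : ℓ¹(ℕ) → X and p : X → ℓ¹(ℕ) with p ∘ i = id). Then there exists an ergodic operator T on X that satisfies condition (NSE), i.e., an ergodic operator on X that is not super-ergodic. -/

import Mathlib

open Filter Topology

/-- The `n`-th Cesàro mean `A_n = (1/n) ∑_{k<n} T^k` of an operator `T`. -/
noncomputable def cesaroMean {X : Type*} [NormedAddCommGroup X] [NormedSpace ℝ X]
    (T : X →L[ℝ] X) (n : ℕ) : X →L[ℝ] X :=
  (n : ℝ)⁻¹ • ∑ k ∈ Finset.range n, T ^ k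

/-- The strong operator topology on `L(X)`: the topology of pointwise convergence,
induced from the product topology on `X → X`. -/
def sot (X : Type*) [NormedAddCommGroup X] [NormedSpace ℝ X] : TopologicalSpace (X →L[ℝ] X) :=
  TopologicalSpace.induced (fun T => (T : X → X)) Pi.topologicalSpace

/-- `T` is Cesàro-bounded if the norms of its Cesàro means are uniformly bounded. -/
def CesaroBounded {X : Type*} [NormedAddCommGroup X] [NormedSpace ℝ X]
    (T : X →L[ℝ] X) : Prop :=
  ∃ M : ℝ, ∀ n : ℕ, ‖cesaroMean T n‖ ≤ M

/-- `T` is ergodic if for every `x` the sequence of Cesàro means at `x` converges in norm. -/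
def IsErgodicOp {X : Type*} [NormedAddCommGroup X] [NormedSpace ℝ X]
    (T : X →L[ℝ] X) : Prop :=
  ∀ x : X, ∃ y : X, Tendsto (fun n => cesaroMean T n x) atTop (𝓝 y)

/-- `T` is uniformly ergodic if the sequence of Cesàro means converges in operator norm. -/
def IsUniformlyErgodicOp {X : Type*} [NormedAddCommGroup X] [NormedSpace ℝ X]
    (T : X →L[ℝ] X) : Prop :=
  ∃ L : X →L[ℝ] X, Tendsto (fun n => cesaroMean T n) atTop (𝓝 L)

/-- Condition (NSE): there are `ε > 0` and a strictly increasing sequence `j` such that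
for every `m` some `x` in the unit ball satisfies `‖A_{j_p} x - A_{j_{p+1}} x‖ > ε`
for all `p ≤ m`. -/
def NSE {X : Type*} [NormedAddCommGroup X] [NormedSpace ℝ X]
    (T : X →L[ℝ] X) : Prop :=
  ∃ ε > (0 : ℝ), ∃ j : ℕ → ℕ, StrictMono j ∧
    ∀ m : ℕ, ∃ x : X, ‖x‖ ≤ 1 ∧
      ∀ p ≤ m, ε < ‖cesaroMean T (j p) x - cesaroMean T (j (p + 1)) x‖

/-- The tree `𝒜_e(T, ε)`: finite strictly increasing sequences `s` of naturals such that
`|s| ≤ 1` or some `x` in the unit ball satisfies `‖A_{s_p} x - A_{s_{p+1}} x‖ > ε`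
for all consecutive pairs of entries of `s`. -/
def ergoTree {X : Type*} [NormedAddCommGroup X] [NormedSpace ℝ X]
    (T : X →L[ℝ] X) (ε : ℝ) : Set (List ℕ) :=
  {s | s.Chain' (· < ·) ∧ (s.length ≤ 1 ∨ ∃ x : X, ‖x‖ ≤ 1 ∧
    ∀ p : ℕ, p + 1 < s.length →
      ε < ‖cesaroMean T (s.getD p 0) x - cesaroMean T (s.getD (p + 1) 0) x‖)}

/-- A tree on `ℕ` (a set of finite sequences) is well-founded if it has no infinite branch. -/
def TreeWF (𝒜 : Set (List ℕ)) : Prop :=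
  ¬ ∃ J : ℕ → ℕ, ∀ m : ℕ, (List.range m).map J ∈ 𝒜

/-- The relation "is a proper extension of", restricted to the nodes of the tree `𝒜`. -/
def treeRel (𝒜 : Set (List ℕ)) : List ℕ → List ℕ → Prop :=
  fun t s => s ∈ 𝒜 ∧ t ∈ 𝒜 ∧ s <+: t ∧ s ≠ t

open Classical in
/-- The height of a well-founded tree: the ordinal rank of the relation
"is a proper extension of" on its nodes, evaluated at the empty sequence
(and `0` by convention if that relation is not well-founded). -/
noncomputable def treeHeight (𝒜 : Set (List ℕ)) : Ordinal :=
  if h : WellFounded (treeRel 𝒜) then (h.apply []).rank else 0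

namespace Stmt16Aux
noncomputable section

abbrev E₁ := lp (fun _ : ℕ => ℝ) 1

lemma memℓp_one_iff {f : ℕ → ℝ} : Memℓp f (1 : ENNReal) ↔ Summable fun n => ‖f n‖ := by
  rw [memℓp_gen_iff (by norm_num : (0:ℝ) < (1:ENNReal).toReal)]; simp

lemma norm_eq_tsum' (f : E₁) : ‖f‖ = ∑' n, ‖f n‖ := by
  rw [lp.norm_eq_tsum_rpow (by norm_num) f]; simp

lemma summable_norm (f : E₁) : Summable fun n => ‖f n‖ := memℓp_one_iff.1 (lp.memℓp f)

lemma coe_mk (f : ℕ → ℝ) (hf : Memℓp f (1:ENNReal)) :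
    ((⟨f, hf⟩ : E₁) : ℕ → ℝ) = f := rfl

lemma shiftMem (f : E₁) : Memℓp (fun n => f (n+1)) (1:ENNReal) :=
  memℓp_one_iff.2 ((summable_nat_add_iff 1).2 (summable_norm f))

def shiftL : E₁ →ₗ[ℝ] E₁ where
  toFun f := ⟨fun n => f (n+1), shiftMem f⟩
  map_add' f g := by
    apply lp.ext; funext n
    simp [coe_mk, lp.coeFn_add]
    rfl
  map_smul' c f := by
    apply lp.ext; funext n
    simp [coe_mk, lp.coeFn_smul]

lemma shiftL_norm_le (f : E₁) : ‖shiftL f‖ ≤ 1 * ‖f‖ := by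
  rw [one_mul, norm_eq_tsum', norm_eq_tsum']
  refine Summable.tsum_le_tsum_of_inj (fun n => n + 1) (fun a b h => by simpa using h)
    (fun c _ => norm_nonneg _) (fun n => le_of_eq rfl)
    ((summable_nat_add_iff 1).2 (summable_norm f)) (summable_norm f)

def B : E₁ →L[ℝ] E₁ := shiftL.mkContinuous 1 shiftL_norm_le

lemma B_apply (f : E₁) (n : ℕ) : B f n = f (n+1) := rfl

lemma B_norm_le (f : E₁) : ‖B f‖ ≤ ‖f‖ := by have := shiftL_norm_le f; rw [one_mul] at this; exact this

lemma B_pow_apply (k : ℕ) (f : E₁) (n : ℕ) : (B^k) f n = f (n + k) := by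
  induction k generalizing f n with
  | zero => simp
  | succ k ih =>
    rw [pow_succ, ContinuousLinearMap.mul_apply, ih, B_apply, Nat.add_assoc]

lemma B_pow_norm_le (k : ℕ) (f : E₁) : ‖(B^k) f‖ ≤ ‖f‖ := by
  induction k with
  | zero => simp
  | succ k ih =>
    rw [pow_succ', ContinuousLinearMap.mul_apply]
    exact (B_norm_le _).trans ih

lemma cesaroMean_apply {X : Type*} [NormedAddCommGroup X] [NormedSpace ℝ X]
    (T : X →L[ℝ] X) (n : ℕ) (x : X) :
    cesaroMean T n x = (n : ℝ)⁻¹ • ∑ k ∈ Finset.range n, (T^k) x := by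
  simp [cesaroMean, ContinuousLinearMap.sum_apply]

lemma lp_sum_apply {ι : Type*} (s : Finset ι) (f : ι → E₁) (q : ℕ) :
    (∑ k ∈ s, f k) q = ∑ k ∈ s, (f k) q := by
  classical
  induction s using Finset.induction_on with
  | empty => simp
  | insert a s h ih =>
    rw [Finset.sum_insert h, Finset.sum_insert h, lp.coeFn_add, Pi.add_apply, ih]

lemma cesaro_B_apply (n : ℕ) (y : E₁) (q : ℕ) :
    cesaroMean B n y q = (n : ℝ)⁻¹ * ∑ k ∈ Finset.range n, y (q + k) := by
  rw [cesaroMean_apply, lp.coeFn_smul, Pi.smul_apply, lp_sum_apply, smul_eq_mul]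
  congr 1
  exact Finset.sum_congr rfl fun k _ => B_pow_apply k y q

lemma cesaro_B_norm_le (n : ℕ) (y : E₁) : ‖cesaroMean B n y‖ ≤ ‖y‖ := by
  rcases Nat.eq_zero_or_pos n with h | h
  · simp [h, cesaroMean, norm_nonneg]
  rw [cesaroMean_apply, norm_smul]
  have hn : (0:ℝ) < n := by exact_mod_cast h
  calc ‖(n:ℝ)⁻¹‖ * ‖∑ k ∈ Finset.range n, (B^k) y‖
      ≤ (n:ℝ)⁻¹ * ∑ k ∈ Finset.range n, ‖(B^k) y‖ := by
        rw [norm_inv, Real.norm_natCast]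
        exact mul_le_mul_of_nonneg_left (norm_sum_le _ _) (by positivity)
    _ ≤ (n:ℝ)⁻¹ * ∑ k ∈ Finset.range n, ‖y‖ := by
        refine mul_le_mul_of_nonneg_left (Finset.sum_le_sum fun k _ => B_pow_norm_le k y) (by positivity)
    _ = ‖y‖ := by
        rw [Finset.sum_const, Finset.card_range, nsmul_eq_mul]
        field_simp

lemma B_ergodic (y : E₁) : Tendsto (fun n => cesaroMean B n y) atTop (𝓝 0) := by
  rw [NormedAddCommGroup.tendsto_nhds_zero]
  intro ε hε
  obtain ⟨N, hN⟩ : ∃ N, ∑' k, ‖y (k + N)‖ < ε/2 := by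
    have := (tendsto_sum_nat_add fun n => ‖y n‖).eventually (eventually_lt_nhds (by positivity : (0:ℝ) < ε/2))
    exact this.exists
  have hy₁mem : Memℓp (fun q => if q < N then y q else 0) (1:ENNReal) := by
    refine memℓp_one_iff.2 (Summable.of_nonneg_of_le (fun q => norm_nonneg _) (fun q => ?_) (summable_norm y))
    by_cases h : q < N <;> simp [h]
  set y₁ : E₁ := ⟨fun q => if q < N then y q else 0, hy₁mem⟩ with hy₁
  have hcoe : ∀ q, y₁ q = if q < N then y q else 0 := fun q => rfl
  have hsub : ∀ q, (y - y₁) q = if q < N then 0 else y q := by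
    intro q
    rw [lp.coeFn_sub, Pi.sub_apply, hcoe]
    by_cases h : q < N <;> simp [h]
  have htail : ‖y - y₁‖ < ε/2 := by
    rw [norm_eq_tsum']
    have hsummable : Summable fun q => ‖(y - y₁) q‖ := summable_norm _
    have h0 : ∑ q ∈ Finset.range N, ‖(y - y₁) q‖ = 0 := by
      refine Finset.sum_eq_zero fun q hq => ?_
      rw [hsub]; simp [Finset.mem_range.1 hq]
    have := Summable.sum_add_tsum_nat_add N hsummable
    rw [h0, zero_add] at this
    rw [← this]
    refine lt_of_le_of_lt (le_of_eq ?_) hN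
    refine tsum_congr fun q => ?_
    rw [hsub]; simp
  -- B^k y₁ = 0 for k ≥ N
  have hkill : ∀ k, N ≤ k → (B^k) y₁ = 0 := by
    intro k hk
    apply lp.ext; funext q
    rw [B_pow_apply]
    have : ¬ (q + k < N) := by omega
    simp [hcoe, this, lp.coeFn_zero]
  have hmain : ∀ n : ℕ, N ≤ n → 1 ≤ n → ‖cesaroMean B n y₁‖ ≤ (n:ℝ)⁻¹ * (N * ‖y₁‖) := by
    intro n hNn h1n
    rw [cesaroMean_apply, norm_smul, norm_inv, Real.norm_natCast]
    have hsum : ∑ k ∈ Finset.range n, (B^k) y₁ = ∑ k ∈ Finset.range N, (B^k) y₁ := by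
      symm
      refine Finset.sum_subset (Finset.range_subset_range.2 hNn) fun k _ hk => ?_
      exact hkill k (by simpa using Finset.mem_range.not.1 hk)
    rw [hsum]
    refine mul_le_mul_of_nonneg_left ?_ (by positivity)
    calc ‖∑ k ∈ Finset.range N, (B^k) y₁‖ ≤ ∑ k ∈ Finset.range N, ‖(B^k) y₁‖ := norm_sum_le _ _
      _ ≤ ∑ k ∈ Finset.range N, ‖y₁‖ := Finset.sum_le_sum fun k _ => B_pow_norm_le k y₁
      _ = N * ‖y₁‖ := by rw [Finset.sum_const, Finset.card_range, nsmul_eq_mul]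
  have hlim : Tendsto (fun n : ℕ => (n:ℝ)⁻¹ * (N * ‖y₁‖)) atTop (𝓝 0) := by
    simpa using (tendsto_inv_atTop_nhds_zero_nat.mul_const ((N:ℝ) * ‖y₁‖))
  have hev : ∀ᶠ n : ℕ in atTop, (n:ℝ)⁻¹ * (N * ‖y₁‖) < ε/2 :=
    hlim.eventually (eventually_lt_nhds (by positivity : (0:ℝ) < ε/2))
  filter_upwards [hev, eventually_ge_atTop N, eventually_ge_atTop 1] with n h1 h2 h3
  have hdecomp : cesaroMean B n y = cesaroMean B n y₁ + cesaroMean B n (y - y₁) := by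
    rw [← map_add, add_sub_cancel]
  rw [hdecomp]
  calc ‖cesaroMean B n y₁ + cesaroMean B n (y - y₁)‖
      ≤ ‖cesaroMean B n y₁‖ + ‖cesaroMean B n (y - y₁)‖ := norm_add_le _ _
    _ ≤ (n:ℝ)⁻¹ * (N * ‖y₁‖) + ‖y - y₁‖ := add_le_add (hmain n h2 h3) (cesaro_B_norm_le n _)
    _ < ε/2 + ε/2 := add_lt_add h1 htail
    _ = ε := by ring

def eVec (M : ℕ) : E₁ := lp.single 1 M (1:ℝ)

lemma eVec_apply (M j : ℕ) : eVec M j = if j = M then 1 else 0 := by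
  by_cases h : j = M
  · subst h; simp [eVec, lp.single_apply_self]
  · simp [eVec, lp.single_apply_ne (E := fun _ : ℕ => ℝ) 1 M (1:ℝ) h, h]

lemma eVec_norm (M : ℕ) : ‖eVec M‖ = 1 := by
  rw [norm_eq_tsum']
  have h : ∀ j, ‖eVec M j‖ = if j = M then (1:ℝ) else 0 := by
    intro j; rw [eVec_apply]; by_cases h : j = M <;> simp [h]
  rw [tsum_congr h, tsum_ite_eq]

lemma cesaro_eVec_apply (n M q : ℕ) (hq1 : M - n < q) (hq2 : q ≤ M) :
    cesaroMean B n (eVec M) q = (n:ℝ)⁻¹ := by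
  rw [cesaro_B_apply]
  have hcongr : ∀ k, (eVec M) (q + k) = if k = M - q then (1:ℝ) else 0 := by
    intro k
    rw [eVec_apply]
    by_cases h : q + k = M
    · rw [if_pos h, if_pos (by omega)]
    · rw [if_neg h, if_neg (by omega)]
  rw [Finset.sum_congr rfl (fun k _ => hcongr k),
    Finset.sum_ite_eq' (Finset.range n) (M-q) (fun _ => (1:ℝ)),
    if_pos (Finset.mem_range.2 (by omega)), mul_one]

lemma key (n M : ℕ) (hn : 1 ≤ n) (h2n : 2*n ≤ M) :
    (1:ℝ)/2 ≤ ‖cesaroMean B n (eVec M) - cesaroMean B (2*n) (eVec M)‖ := by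
  set d : E₁ := cesaroMean B n (eVec M) - cesaroMean B (2*n) (eVec M) with hd
  have hn0 : (n:ℝ) ≠ 0 := by positivity
  have hval : ∀ q ∈ Finset.Ioc (M-n) M, ‖d q‖ = (n:ℝ)⁻¹ - ((2*n:ℕ):ℝ)⁻¹ := by
    intro q hq
    rw [Finset.mem_Ioc] at hq
    rw [hd, lp.coeFn_sub, Pi.sub_apply,
      cesaro_eVec_apply n M q hq.1 hq.2,
      cesaro_eVec_apply (2*n) M q (by omega) hq.2]
    rw [Real.norm_eq_abs, abs_of_nonneg]
    have : ((2*n:ℕ):ℝ) = 2*(n:ℝ) := by push_cast; ring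
    rw [this]
    have h1 : (2*(n:ℝ))⁻¹ ≤ (n:ℝ)⁻¹ := by
      apply inv_anti₀ (by positivity)
      have : (1:ℝ) ≤ (n:ℝ) := by exact_mod_cast hn
      nlinarith
    linarith
  have hs : ∑ q ∈ Finset.Ioc (M-n) M, ‖d q‖ = 1/2 := by
    rw [Finset.sum_congr rfl hval, Finset.sum_const, Nat.card_Ioc, nsmul_eq_mul]
    have hM : M - (M - n) = n := by omega
    rw [hM]
    push_cast
    field_simp
    ring
  calc (1:ℝ)/2 = ∑ q ∈ Finset.Ioc (M-n) M, ‖d q‖ := hs.symm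
    _ ≤ ∑' q, ‖d q‖ := Summable.sum_le_tsum _ (fun _ _ => norm_nonneg _) (summable_norm d)
    _ = ‖d‖ := (norm_eq_tsum' d).symm

end
end Stmt16Aux

open Stmt16Aux in
set_option maxHeartbeats 1000000 in
/-- If a separable Banach space `X` contains a complemented copy of `ℓ¹(ℕ)`, then there is an
ergodic operator on `X` satisfying (NSE), i.e., ergodic but not super-ergodic. -/
theorem stmt_16 (X : Type*) [NormedAddCommGroup X] [NormedSpace ℝ X] [CompleteSpace X]
    [TopologicalSpace.SeparableSpace X]
    (i : lp (fun _ : ℕ => ℝ) 1 →L[ℝ] X) (p : X →L[ℝ] lp (fun _ : ℕ => ℝ) 1)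
    (hpi : ∀ y : lp (fun _ : ℕ => ℝ) 1, p (i y) = y) :
    ∃ T : X →L[ℝ] X, IsErgodicOp T ∧ NSE T := by
  classical
  set T : X →L[ℝ] X :=
    i.comp (Stmt16Aux.B.comp p) + (ContinuousLinearMap.id ℝ X - i.comp p) with hT
  have hTapp : ∀ x, T x = i (B (p x)) + (x - i (p x)) := fun x => rfl
  have hTpow : ∀ (k : ℕ) (x : X), (T^k) x = i ((B^k) (p x)) + (x - i (p x)) := by
    intro k
    induction k with
    | zero =>
      intro x
      rw [pow_zero, pow_zero, ContinuousLinearMap.one_apply, ContinuousLinearMap.one_apply]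
      abel
    | succ k ih =>
      intro x
      rw [pow_succ, ContinuousLinearMap.mul_apply, ih (T x)]
      have hpT : p (T x) = B (p x) := by
        rw [hTapp, map_add, map_sub, hpi, hpi]
        abel
      rw [hpT, hTapp]
      have hBk : (B^k) (B (p x)) = (B^(k+1)) (p x) := by
        rw [pow_succ, ContinuousLinearMap.mul_apply]
      rw [hBk]
      abel
  have hcesT : ∀ n : ℕ, 1 ≤ n → ∀ x,
      cesaroMean T n x = i (cesaroMean B n (p x)) + (x - i (p x)) := by
    intro n hn x
    have hn0 : (n:ℝ) ≠ 0 := by positivity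
    rw [cesaroMean_apply, cesaroMean_apply,
      Finset.sum_congr rfl (fun k _ => hTpow k x), Finset.sum_add_distrib,
      ← map_sum, Finset.sum_const, Finset.card_range, smul_add, map_smul,
      ← Nat.cast_smul_eq_nsmul ℝ n (x - i (p x)), smul_smul, inv_mul_cancel₀ hn0, one_smul]
  refine ⟨T, ?_, ?_⟩
  · -- ergodic
    intro x
    refine ⟨x - i (p x), ?_⟩
    have h0 : Tendsto (fun n => i (cesaroMean B n (p x))) atTop (𝓝 0) := by
      have := (i.continuous.tendsto 0).comp (B_ergodic (p x))
      simpa [Function.comp_def] using this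
    have h1 : Tendsto (fun n => i (cesaroMean B n (p x)) + (x - i (p x))) atTop
        (𝓝 (x - i (p x))) := by
      simpa using h0.add_const (x - i (p x))
    refine h1.congr' ?_
    filter_upwards [eventually_ge_atTop 1] with n hn
    exact (hcesT n hn x).symm
  · -- NSE
    refine ⟨((4:ℝ) * (‖i‖+1) * (‖p‖+1))⁻¹, by positivity, fun q => 2^q, ?_, ?_⟩
    · intro a b hab
      exact Nat.pow_lt_pow_right (by norm_num) hab
    intro m
    set M : ℕ := 2^(m+1) with hM
    set e : lp (fun _ : ℕ => ℝ) 1 := eVec M with he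
    have henorm : ‖e‖ = 1 := eVec_norm M
    have hie : ‖i e‖ ≤ ‖i‖ + 1 := by
      have := i.le_opNorm e
      rw [henorm, mul_one] at this
      linarith
    have hipos : (0:ℝ) < ‖i‖ + 1 := by positivity
    refine ⟨(‖i‖+1)⁻¹ • i e, ?_, ?_⟩
    · rw [norm_smul, norm_inv, Real.norm_eq_abs, abs_of_pos hipos]
      calc (‖i‖+1)⁻¹ * ‖i e‖ ≤ (‖i‖+1)⁻¹ * (‖i‖+1) :=
            mul_le_mul_of_nonneg_left hie (by positivity)
        _ = 1 := inv_mul_cancel₀ (by positivity)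
    intro q hq
    have h1 : (1:ℕ) ≤ 2^q := Nat.one_le_two_pow
    have h1' : (1:ℕ) ≤ 2^(q+1) := Nat.one_le_two_pow
    have h3 : 2 * 2^q ≤ M := by
      rw [hM]
      calc 2 * 2^q = 2^(q+1) := by ring
        _ ≤ 2^(m+1) := Nat.pow_le_pow_right (by norm_num) (by omega)
    have hkey : (1:ℝ)/2 ≤ ‖cesaroMean B (2^q) e - cesaroMean B (2^(q+1)) e‖ := by
      have := key (2^q) M h1 h3
      have h2 : 2 * 2^q = 2^(q+1) := by ring
      rwa [h2] at this
    set d : lp (fun _ : ℕ => ℝ) 1 := cesaroMean B (2^q) e - cesaroMean B (2^(q+1)) e with hd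
    have hpi_e : p (i e) = e := hpi e
    have hdiff : cesaroMean T (2^q) ((‖i‖+1)⁻¹ • i e)
        - cesaroMean T (2^(q+1)) ((‖i‖+1)⁻¹ • i e) = (‖i‖+1)⁻¹ • i d := by
      rw [map_smul, map_smul, ← smul_sub]
      congr 1
      rw [hcesT _ h1 (i e), hcesT _ h1' (i e), hpi_e, hd, map_sub]
      abel
    rw [hdiff, norm_smul, norm_inv, Real.norm_eq_abs, abs_of_pos hipos]
    have hppos : (0:ℝ) < ‖p‖ + 1 := by positivity
    have hlow : ‖d‖ ≤ (‖p‖+1) * ‖i d‖ := by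
      calc ‖d‖ = ‖p (i d)‖ := by rw [hpi d]
        _ ≤ ‖p‖ * ‖i d‖ := p.le_opNorm _
        _ ≤ (‖p‖+1) * ‖i d‖ := by nlinarith [norm_nonneg (i d)]
    have hid : (1:ℝ)/2 ≤ (‖p‖+1) * ‖i d‖ := hkey.trans hlow
    have hdiv : (1:ℝ)/2 / (‖p‖+1) ≤ ‖i d‖ := by
      rw [div_le_iff₀ hppos]
      calc (1:ℝ)/2 ≤ (‖p‖+1) * ‖i d‖ := hid
        _ = ‖i d‖ * (‖p‖+1) := mul_comm _ _
    have key2 : (‖i‖+1)⁻¹ * ((1:ℝ)/2 / (‖p‖+1)) ≤ (‖i‖+1)⁻¹ * ‖i d‖ :=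
      mul_le_mul_of_nonneg_left hdiv (by positivity)
    have heq : (‖i‖+1)⁻¹ * ((1:ℝ)/2 / (‖p‖+1)) = (2 * (‖i‖+1) * (‖p‖+1))⁻¹ := by
      field_simp
    have hlt : ((4:ℝ) * (‖i‖+1) * (‖p‖+1))⁻¹ < (2 * (‖i‖+1) * (‖p‖+1))⁻¹ := by
      rw [← one_div, ← one_div]
      apply one_div_lt_one_div_of_lt (by positivity)
      nlinarith
    calc ((4:ℝ) * (‖i‖+1) * (‖p‖+1))⁻¹ < (2 * (‖i‖+1) * (‖p‖+1))⁻¹ := hlt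
      _ = (‖i‖+1)⁻¹ * ((1:ℝ)/2 / (‖p‖+1)) := heq.symm
      _ ≤ (‖i‖+1)⁻¹ * ‖i d‖ := key2
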